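/- A Tychonoff space X is Lindelöf at infinity (i.e., βX \ X is Lindelöf) if and only if X is of countable type. -/

import Mathlib

open Set

/-- A space is Menger if for every sequence of open covers one can choose finite
subfamilies whose union is a cover. -/
def Menger (X : Type*) [TopologicalSpace X] : Prop :=
  ∀ U : ℕ → Set (Set X),
    (∀ n, (∀ s ∈ U n, IsOpen s) ∧ ⋃₀ U n = Set.univ) →
    ∃ V : ℕ → Set (Set X),
      (∀ n, V n ⊆ U n ∧ (V n).Finite) ∧ ⋃₀ (⋃ n, V n) = Set.univ

/-- A family of open sets is an almost covering if the complement of its union is compact. -/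
def AlmostCover {X : Type*} [TopologicalSpace X] (U : Set (Set X)) : Prop :=
  (∀ s ∈ U, IsOpen s) ∧ IsCompact (⋃₀ U)ᶜ

/-- The selection principle `S_fin(𝓐,𝓐)` for almost coverings. -/
def SfinAA (X : Type*) [TopologicalSpace X] : Prop :=
  ∀ U : ℕ → Set (Set X), (∀ n, AlmostCover (U n)) →
    ∃ V : ℕ → Set (Set X),
      (∀ n, V n ⊆ U n ∧ (V n).Finite) ∧ IsCompact (⋃₀ (⋃ n, V n))ᶜ

/-- A sequence of sets is a closed net at `K` if each member is closed and contains `K`,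
and every open neighborhood of `K` contains some member. -/
def ClosedNetSeqAt {X : Type*} [TopologicalSpace X] (F : ℕ → Set X) (K : Set X) : Prop :=
  (∀ n, IsClosed (F n) ∧ K ⊆ F n) ∧
    ∀ A : Set X, IsOpen A → K ⊆ A → ∃ n, F n ⊆ A

/-- A decreasing closed net at `K`. -/
def DecClosedNetSeqAt {X : Type*} [TopologicalSpace X] (F : ℕ → Set X) (K : Set X) : Prop :=
  (∀ n, F (n + 1) ⊆ F n) ∧ ClosedNetSeqAt F K

/-- A compact set `Q` has a countable (outer) neighborhood base in `X`. -/
def HasCountableOuterBase {X : Type*} [TopologicalSpace X] (Q : Set X) : Prop :=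
  ∃ B : ℕ → Set X, (∀ k, IsOpen (B k) ∧ Q ⊆ B k) ∧
    ∀ A : Set X, IsOpen A → Q ⊆ A → ∃ k, B k ⊆ A

/-- `X` is of countable type: every compact set is contained in a compact set having a
countable neighborhood base in `X`. -/
def CountableType (X : Type*) [TopologicalSpace X] : Prop :=
  ∀ K : Set X, IsCompact K → ∃ Q : Set X, IsCompact Q ∧ K ⊆ Q ∧ HasCountableOuterBase Q

/-- The remainder `βX \ X` of the Stone–Čech compactification. -/
abbrev StoneCechRemainder (X : Type*) [TopologicalSpace X] : Set (StoneCech X) :=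
  (Set.range (stoneCechUnit : X → StoneCech X))ᶜ



section HenriksenIsbellAux
open Set Topology Filter unitInterval
namespace HenriksenIsbell

theorem myIsInducing_stoneCechUnit {X : Type*} [TopologicalSpace X] [T35Space X] :
    Topology.IsInducing (stoneCechUnit : X → StoneCech X) := by
  rw [Topology.isInducing_iff_nhds]
  intro x
  refine le_antisymm ((continuous_stoneCechUnit.tendsto x).le_comap) ?_
  rw [le_nhds_iff]
  intro U hxU hU
  obtain ⟨f, hf, hf0, hf1⟩ := CompletelyRegularSpace.completely_regular x Uᶜ
    hU.isClosed_compl (by simpa using hxU)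
  rw [Filter.mem_comap]
  refine ⟨(stoneCechExtend hf) ⁻¹' {(1 : I)}ᶜ, ?_, ?_⟩
  · apply IsOpen.mem_nhds ((isClosed_singleton.isOpen_compl).preimage (continuous_stoneCechExtend hf))
    simp only [mem_preimage, mem_compl_iff, mem_singleton_iff]
    rw [show stoneCechExtend hf (stoneCechUnit x) = f x from congrFun (stoneCechExtend_extends hf) x, hf0]
    exact zero_ne_one
  · intro y hy
    by_contra hyU
    apply hy
    simp only [mem_preimage, mem_compl_iff, mem_singleton_iff, not_not]
    rw [show stoneCechExtend hf (stoneCechUnit y) = f y from congrFun (stoneCechExtend_extends hf) y]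
    exact hf1 hyU

theorem myIsEmbedding_stoneCechUnit {X : Type*} [TopologicalSpace X] [T35Space X] :
    Topology.IsEmbedding (stoneCechUnit : X → StoneCech X) :=
  ⟨myIsInducing_stoneCechUnit, injective_stoneCechUnit_of_t35Space⟩


theorem dir2 {X : Type*} [TopologicalSpace X] [T35Space X] (hct : CountableType X) :
    LindelofSpace ↥(StoneCechRemainder X) := by
  classical
  have he : Topology.IsEmbedding (stoneCechUnit : X → StoneCech X) := myIsEmbedding_stoneCechUnit
  set e : X → StoneCech X := stoneCechUnit with he_def
  rw [← isLindelof_iff_LindelofSpace]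
  apply isLindelof_of_countable_subcover
  intro ι U hUo hsU
  set F : Set (StoneCech X) := (⋃ i, U i)ᶜ with hF_def
  have hFcl : IsClosed F := (isOpen_iUnion hUo).isClosed_compl
  have hFc : IsCompact F := hFcl.isCompact
  have hFr : F ⊆ range e := by
    intro p hp
    by_contra h
    exact hp (hsU h)
  have hKc : IsCompact (e ⁻¹' F) := by
    rw [he.isCompact_iff, image_preimage_eq_of_subset hFr]
    exact hFc
  obtain ⟨Q, hQc, hKQ, B, hB, hBbase⟩ := hct _ hKc
  set C : ℕ → Set (StoneCech X) := fun n => closure (e '' (B n)ᶜ) with hC_def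
  have hCc : ∀ n, IsCompact (C n) := fun n => isClosed_closure.isCompact
  have hCU : ∀ n, C n ⊆ ⋃ i, U i := by
    intro n p hp
    by_contra hpU
    have hpF : p ∈ F := hpU
    obtain ⟨y, rfl⟩ := hFr hpF
    have h1 : y ∈ closure ((B n)ᶜ) := by
      rw [he.isInducing.closure_eq_preimage_closure_image]
      exact hp
    rw [(hB n).1.isClosed_compl.closure_eq] at h1
    exact h1 ((hB n).2 (hKQ hpF))
  choose s hs using fun n => (hCc n).elim_finite_subcover U hUo (hCU n)
  refine ⟨⋃ n, (s n : Set ι), countable_iUnion fun n => (s n).countable_toSet, ?_⟩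
  intro p hp
  have hpC : ∃ n, p ∈ C n := by
    by_contra hcon
    push_neg at hcon
    have hQLcl : IsClosed (e '' Q) := (hQc.image continuous_stoneCechUnit).isClosed
    have hpQ : ({p} : Set (StoneCech X)) ⊆ (e '' Q)ᶜ := by
      rintro q rfl
      intro hq
      exact hp (image_subset_range e Q hq)
    obtain ⟨u, hu, hpu, hucl⟩ := normal_exists_closure_subset isClosed_singleton
      hQLcl.isOpen_compl hpQ
    have hQu : e '' Q ⊆ (closure u)ᶜ := by
      intro q hq hq2
      exact hucl hq2 hq
    obtain ⟨H, hH, hQH, hHcl⟩ := normal_exists_closure_subset hQLcl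
      isClosed_closure.isOpen_compl hQu
    have hQH' : Q ⊆ e ⁻¹' H := fun y hy => hQH ⟨y, hy, rfl⟩
    obtain ⟨n, hn⟩ := hBbase _ (hH.preimage continuous_stoneCechUnit) hQH'
    have hVopen : IsOpen (C n)ᶜ := isClosed_closure.isOpen_compl
    have hsub : (C n)ᶜ ∩ range e ⊆ e '' B n := by
      rintro q ⟨hq1, y, rfl⟩
      by_contra hy
      have hyB : y ∈ (B n)ᶜ := fun hyB => hy ⟨y, hyB, rfl⟩
      exact hq1 (subset_closure ⟨y, hyB, rfl⟩)
    have hdense : (C n)ᶜ ⊆ closure ((C n)ᶜ ∩ range e) :=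
      denseRange_stoneCechUnit.open_subset_closure_inter hVopen
    have heBH : e '' B n ⊆ H := (image_mono (f := e) hn).trans (image_preimage_subset e H)
    have hchain : (C n)ᶜ ⊆ closure H :=
      hdense.trans ((closure_mono (hsub.trans heBH)))
    exact (hHcl (hchain (hcon n))) (subset_closure (hpu rfl))
  obtain ⟨n, hn⟩ := hpC
  obtain ⟨i, hi, hpi⟩ := mem_iUnion₂.1 (hs n hn)
  exact mem_iUnion₂.2 ⟨i, mem_iUnion.2 ⟨n, hi⟩, hpi⟩

theorem dir1 {X : Type*} [TopologicalSpace X] [T35Space X]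
    (h : LindelofSpace ↥(StoneCechRemainder X)) : CountableType X := by
  classical
  have he : Topology.IsEmbedding (stoneCechUnit : X → StoneCech X) := myIsEmbedding_stoneCechUnit
  set e : X → StoneCech X := stoneCechUnit with he_def
  have hR : IsLindelof (StoneCechRemainder X) := isLindelof_iff_LindelofSpace.mpr h
  intro K hK
  set L : Set (StoneCech X) := e '' K with hL_def
  have hLc : IsCompact L := hK.image continuous_stoneCechUnit
  have hLcl : IsClosed L := hLc.isClosed
  have sep : ∀ p : ↥(StoneCechRemainder X), ∃ u : Set (StoneCech X),
      IsOpen u ∧ (p : StoneCech X) ∈ u ∧ closure u ⊆ Lᶜ := by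
    intro p
    have hpL : ({(p : StoneCech X)} : Set (StoneCech X)) ⊆ Lᶜ := by
      rintro q rfl
      intro hq
      exact p.2 (image_subset_range e K hq)
    obtain ⟨u, hu, hpu, hucl⟩ := normal_exists_closure_subset isClosed_singleton
      hLcl.isOpen_compl hpL
    exact ⟨u, hu, hpu rfl, hucl⟩
  choose u hu hpu hucl using sep
  obtain ⟨t, htc, htcov⟩ := hR.elim_countable_subcover u hu
    (fun q hq => mem_iUnion.2 ⟨⟨q, hq⟩, hpu _⟩)
  obtain ⟨P, hPcl, hPL, hPcov⟩ :
      ∃ P : ℕ → Set (StoneCech X), (∀ n, IsClosed (P n)) ∧ (∀ n, P n ⊆ Lᶜ) ∧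
        StoneCechRemainder X ⊆ ⋃ n, P n := by
    rcases t.eq_empty_or_nonempty with h0 | hne
    · refine ⟨fun _ => ∅, fun _ => isClosed_empty, fun _ => empty_subset _, ?_⟩
      intro q hq
      have := htcov hq
      simp [h0] at this
    · obtain ⟨f, hf⟩ := htc.exists_eq_range hne
      refine ⟨fun n => closure (u (f n)), fun _ => isClosed_closure, fun n => hucl _, ?_⟩
      intro q hq
      obtain ⟨p, hpt, hqp⟩ := mem_iUnion₂.1 (htcov hq)
      rw [hf] at hpt
      obtain ⟨n, rfl⟩ := hpt
      exact mem_iUnion.2 ⟨n, subset_closure hqp⟩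
  set W : ℕ → Set (StoneCech X) := fun k => (⋃ i ∈ Finset.range (k+1), P i)ᶜ with hW_def
  have hWopen : ∀ k, IsOpen (W k) := fun k =>
    (isClosed_biUnion_finset (fun i _ => hPcl i)).isOpen_compl
  have hLW : ∀ k, L ⊆ W k := by
    intro k x hx hx2
    obtain ⟨i, -, hxi⟩ := mem_iUnion₂.1 hx2
    exact hPL i hxi hx
  have hWrange : ∀ p, (∀ k, p ∈ W k) → p ∈ range e := by
    intro p hp
    by_contra hpr
    obtain ⟨n, hn⟩ := mem_iUnion.1 (hPcov hpr)
    exact hp n (mem_iUnion₂.2 ⟨n, Finset.self_mem_range_succ n, hn⟩)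
  have step : ∀ (s : {s : Set (StoneCech X) // IsOpen s ∧ L ⊆ s}) (k : ℕ),
      ∃ v : {s : Set (StoneCech X) // IsOpen s ∧ L ⊆ s}, closure v.1 ⊆ s.1 ∩ W k := by
    intro s k
    obtain ⟨v, hv, hLv, hvcl⟩ := normal_exists_closure_subset hLcl (s.2.1.inter (hWopen k))
      (subset_inter s.2.2 (hLW k))
    exact ⟨⟨v, hv, hLv⟩, hvcl⟩
  choose g hg using step
  set E : ℕ → {s : Set (StoneCech X) // IsOpen s ∧ L ⊆ s} :=
    fun n => Nat.rec (g ⟨univ, isOpen_univ, subset_univ _⟩ 0) (fun k p => g p (k+1)) n with hE_def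
  have hE0 : closure (E 0).1 ⊆ W 0 := (hg _ 0).trans inter_subset_right
  have hEs : ∀ k, closure (E (k+1)).1 ⊆ (E k).1 ∩ W (k+1) := fun k => hg (E k) (k+1)
  have hEW : ∀ k, closure (E k).1 ⊆ W k := by
    intro k
    cases k with
    | zero => exact hE0
    | succ k => exact (hEs k).trans inter_subset_right
  have hEmono : ∀ k, closure (E (k+1)).1 ⊆ closure (E k).1 :=
    fun k => ((hEs k).trans inter_subset_left).trans subset_closure
  set Qhat : Set (StoneCech X) := ⋂ k, closure (E k).1 with hQhat_def
  have hQhatcl : IsClosed Qhat := isClosed_iInter fun _ => isClosed_closure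
  have hQhatc : IsCompact Qhat := hQhatcl.isCompact
  have hLQhat : L ⊆ Qhat := subset_iInter fun k => (E k).2.2.trans subset_closure
  have hQhatrange : Qhat ⊆ range e := fun p hp =>
    hWrange p fun k => hEW k (mem_iInter.1 hp k)
  have hQhatE : ∀ k, Qhat ⊆ (E k).1 := fun k p hp =>
    ((hEs k).trans inter_subset_left) (mem_iInter.1 hp (k+1))
  have hbase : ∀ G : Set (StoneCech X), IsOpen G → Qhat ⊆ G → ∃ k, closure (E k).1 ⊆ G := by
    intro G hG hQG
    by_contra hcon
    push_neg at hcon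
    have hne : ∀ k, (closure (E k).1 ∩ Gᶜ).Nonempty := by
      intro k
      obtain ⟨x, hx1, hx2⟩ := not_subset.1 (hcon k)
      exact ⟨x, hx1, hx2⟩
    obtain ⟨x, hx⟩ := IsCompact.nonempty_iInter_of_sequence_nonempty_isCompact_isClosed
      (fun k => closure (E k).1 ∩ Gᶜ)
      (fun k => inter_subset_inter_left _ (hEmono k)) hne
      (isClosed_closure.isCompact.inter_right hG.isClosed_compl)
      (fun k => isClosed_closure.inter hG.isClosed_compl)
    have hx1 : x ∈ Qhat := mem_iInter.2 fun k => (mem_iInter.1 hx k).1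
    exact (mem_iInter.1 hx 0).2 (hQG hx1)
  refine ⟨e ⁻¹' Qhat, ?_, ?_, ?_⟩
  · rw [he.isCompact_iff, image_preimage_eq_of_subset hQhatrange]
    exact hQhatc
  · intro x hx
    exact mem_preimage.2 (hLQhat ⟨x, hx, rfl⟩)
  · refine ⟨fun k => e ⁻¹' (E k).1, fun k => ⟨(E k).2.1.preimage continuous_stoneCechUnit,
      preimage_mono (hQhatE k)⟩, ?_⟩
    intro A hA hQA
    obtain ⟨G, hG, hGA⟩ := he.isInducing.isOpen_iff.1 hA
    have hQhatG : Qhat ⊆ G := by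
      intro p hp
      obtain ⟨y, rfl⟩ := hQhatrange hp
      have hy : y ∈ e ⁻¹' Qhat := hp
      have hyA := hQA hy
      rw [← hGA] at hyA
      exact hyA
    obtain ⟨k, hk⟩ := hbase G hG hQhatG
    refine ⟨k, ?_⟩
    rw [← hGA]
    exact preimage_mono (subset_closure.trans hk)

end HenriksenIsbell
end HenriksenIsbellAux

theorem stmt14 {X : Type*} [TopologicalSpace X] [T35Space X] :
    LindelofSpace ↥(StoneCechRemainder X) ↔ CountableType X :=
  ⟨HenriksenIsbell.dir1, HenriksenIsbell.dir2⟩
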